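/- Let U be a slice-open subset of ℍ and q ∈ U. Then there exists a real-connected slice-domain V with q ∈ V ⊆ U, where real-connected means V ∩ ℝ is connected (possibly empty) in ℝ. -/

import Mathlib

noncomputable section

abbrev Hq := Quaternion ℝ

/-- The sphere of imaginary units of the quaternions. -/
def SphereS : Set Hq := {q | q ^ 2 = -1}

/-- The identification of `ℂ` with the slice plane `ℂ_I = ℝ + ℝI`. -/
def sliceEmb (I : Hq) : ℂ → Hq := fun z => (z.re : Hq) + (z.im : Hq) * I

/-- The slice complex plane `ℂ_I = ℝ + ℝI`. -/
def sliceC (I : Hq) : Set Hq := Set.range (sliceEmb I)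

/-- The slice-topology on the quaternions: the quotient topology induced by the
canonical map from the disjoint union of the slices, i.e. the supremum of the
topologies coinduced by the parametrizations of the slices. -/
def sliceTopology : TopologicalSpace Hq :=
  ⨆ I ∈ SphereS, TopologicalSpace.coinduced (sliceEmb I) inferInstance

/-- The real line inside the quaternions. -/
def realLine : Set Hq := Set.range (fun x : ℝ => (x : Hq))

/-- `g : ℂ → ℍ` (thought of as a function on the slice `ℂ_I`) is (left) holomorphic on
`U`: real differentiable with `∂ₓ g + I ∂_y g = 0`. -/
def SliceHolomorphicOn (I : Hq) (g : ℂ → Hq) (U : Set ℂ) : Prop :=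
  ∀ z ∈ U, ∃ L : ℂ →L[ℝ] Hq, HasFDerivAt g L z ∧ L 1 + I * L Complex.I = 0

/-- A function on a slice-open set is slice regular if it is holomorphic on each slice. -/
def SliceRegular (f : Hq → Hq) (Ω : Set Hq) : Prop :=
  ∀ I ∈ SphereS, SliceHolomorphicOn I (f ∘ sliceEmb I) (sliceEmb I ⁻¹' Ω)

/-- `K(m)` for `K ∈ 𝕊^N` (with `K 0 = 1` by convention) and `1 ≤ m ≤ 2^N`:
`∏_{i=N}^{1} (K_i K_{i-1})^{m_i}` where `(m_N … m_1)₂` is the binary expansion of `m-1`. -/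
def zetaTerm (K : ℕ → Hq) (N m : ℕ) : Hq :=
  ((List.range N).reverse.map
    (fun j => (K (j + 1) * K j) ^ (if Nat.testBit (m - 1) j then 1 else 0))).prod

/-- The matrix `σ_N` (0-indexed): entry `(i,j)` is `(-1)^{N+(j+1)}` if
`(i+1)+(j+1) = 2^N + 1`, and `0` otherwise. -/
def sigmaMat (N : ℕ) : Matrix (Fin (2 ^ N)) (Fin (2 ^ N)) ℝ :=
  Matrix.of fun i j =>
    if (i : ℕ) + (j : ℕ) = 2 ^ N - 1 then (-1 : ℝ) ^ (N + (j : ℕ) + 1) else 0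

def QOrth (I J : Hq) : Prop := (I * star J).re = 0

open Complex Set Quaternion TopologicalSpace Topology

lemma sphere_re {I : Hq} (hI : I ∈ SphereS) : I.re = 0 := by
  have h := hI
  simp only [SphereS, Set.mem_setOf_eq, sq] at h
  have h1 := congrArg QuaternionAlgebra.re h
  have h2 := congrArg QuaternionAlgebra.imI h
  have h3 := congrArg QuaternionAlgebra.imJ h
  have h4 := congrArg QuaternionAlgebra.imK h
  simp only [Quaternion.re_mul, Quaternion.imI_mul, Quaternion.imJ_mul, Quaternion.imK_mul,
    Quaternion.re_neg, Quaternion.imI_neg, Quaternion.imJ_neg, Quaternion.imK_neg,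
    Quaternion.re_one, Quaternion.imI_one, Quaternion.imJ_one, Quaternion.imK_one] at h1 h2 h3 h4
  by_contra hre
  have hb : I.imI = 0 := by
    have h : I.re * I.imI = 0 := by linarith
    exact (mul_eq_zero.mp h).resolve_left hre
  have hc : I.imJ = 0 := by
    have h : I.re * I.imJ = 0 := by linarith
    exact (mul_eq_zero.mp h).resolve_left hre
  have hd : I.imK = 0 := by
    have h : I.re * I.imK = 0 := by linarith
    exact (mul_eq_zero.mp h).resolve_left hre
  rw [hb, hc, hd] at h1
  nlinarith [mul_self_nonneg I.re]

lemma sphere_ne_zero {I : Hq} (hI : I ∈ SphereS) : I ≠ 0 := by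
  intro h
  have := hI
  simp only [SphereS, Set.mem_setOf_eq, h] at this
  have := congrArg QuaternionAlgebra.re this
  simp at this

lemma sphere_neg {I : Hq} (hI : I ∈ SphereS) : -I ∈ SphereS := by
  simpa only [SphereS, Set.mem_setOf_eq, neg_sq] using hI

lemma sphere_ne_neg_self {I : Hq} (hI : I ∈ SphereS) : I ≠ -I := by
  intro h
  apply sphere_ne_zero hI
  have h1 := congrArg QuaternionAlgebra.imI h
  have h2 := congrArg QuaternionAlgebra.imJ h
  have h3 := congrArg QuaternionAlgebra.imK h
  simp only [Quaternion.imI_neg, Quaternion.imJ_neg, Quaternion.imK_neg] at h1 h2 h3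
  ext
  · exact sphere_re hI
  · simp; linarith
  · simp; linarith
  · simp; linarith

lemma basic_I_mem : (⟨0, 1, 0, 0⟩ : Hq) ∈ SphereS := by
  show (⟨0, 1, 0, 0⟩ : Hq) ^ 2 = -1
  refine (sq _).trans ?_
  ext <;> simp

lemma slice_conj (I : Hq) (z : ℂ) :
    sliceEmb (-I) z = sliceEmb I ((starRingEnd ℂ) z) := by
  simp only [sliceEmb, Complex.conj_re, Complex.conj_im]
  push_cast
  rw [mul_neg, neg_mul]

lemma sliceEmb_ofReal (I : Hq) (y : ℝ) : sliceEmb I (y : ℂ) = (y : Hq) := by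
  simp [sliceEmb]

lemma slice_eq_cases {I J : Hq} (hI : I ∈ SphereS) (hJ : J ∈ SphereS) {w z : ℂ}
    (h : sliceEmb I w = sliceEmb J z) :
    (I = J ∧ w = z) ∨ (I = -J ∧ w = (starRingEnd ℂ) z) ∨
      (w.im = 0 ∧ z.im = 0 ∧ w.re = z.re) := by
  have hIre := sphere_re hI
  have hJre := sphere_re hJ
  have h1 := congrArg QuaternionAlgebra.re h
  have h2 := congrArg QuaternionAlgebra.imI h
  have h3 := congrArg QuaternionAlgebra.imJ h
  have h4 := congrArg QuaternionAlgebra.imK h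
  simp only [sliceEmb, Quaternion.re_add, Quaternion.imI_add, Quaternion.imJ_add,
    Quaternion.imK_add, Quaternion.re_coe, Quaternion.imI_coe, Quaternion.imJ_coe,
    Quaternion.imK_coe, Quaternion.re_mul, Quaternion.imI_mul, Quaternion.imJ_mul,
    Quaternion.imK_mul, hIre, hJre, mul_zero, zero_mul, sub_zero, add_zero, zero_add,
    zero_sub, neg_zero] at h1 h2 h3 h4
  -- h1 : w.re = z.re, h2 : w.im * I.imI = z.im * J.imI, etc.
  by_cases hwim : w.im = 0
  · right; right
    refine ⟨hwim, ?_, h1⟩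
    by_contra hzim
    apply sphere_ne_zero hJ
    rw [hwim, zero_mul] at h2 h3 h4
    ext
    · exact hJre
    · exact ((mul_eq_zero.mp h2.symm).resolve_left hzim)
    · exact ((mul_eq_zero.mp h3.symm).resolve_left hzim)
    · exact ((mul_eq_zero.mp h4.symm).resolve_left hzim)
  · -- I = (z.im / w.im) • J
    set c : ℝ := z.im / w.im with hc
    have hIcJ : I = c • J := by
      ext
      · simp [hIre, hJre]
      · simp only [Quaternion.imI_smul, smul_eq_mul]; rw [hc]; field_simp; linarith [h2]
      · simp only [Quaternion.imJ_smul, smul_eq_mul]; rw [hc]; field_simp; linarith [h3]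
      · simp only [Quaternion.imK_smul, smul_eq_mul]; rw [hc]; field_simp; linarith [h4]
    have hcsq : c * c = 1 := by
      have hI2 : (c • J) * (c • J) = -1 := by rw [← hIcJ, ← sq]; exact hI
      rw [smul_mul_smul_comm] at hI2
      have hJ2 : J * J = -1 := by rw [← sq]; exact hJ
      rw [hJ2] at hI2
      have h5 := congrArg QuaternionAlgebra.re hI2
      simp only [Quaternion.re_smul, Quaternion.re_neg, Quaternion.re_one,
        smul_eq_mul] at h5
      linarith
    have hz : z.im = c * w.im := by rw [hc]; field_simp
    rcases mul_self_eq_one_iff.mp hcsq with hc1 | hc1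
    · left
      constructor
      · rw [hIcJ, hc1, one_smul]
      · exact Complex.ext h1 (by rw [hz, hc1, one_mul])
    · right; left
      constructor
      · rw [hIcJ, hc1, neg_one_smul]
      · exact Complex.ext (by simpa using h1)
          (by simp only [Complex.conj_im]; rw [hz, hc1]; ring)

lemma sliceEmb_injective {I : Hq} (hI : I ∈ SphereS) : Function.Injective (sliceEmb I) := by
  intro w z h
  rcases slice_eq_cases hI hI h with ⟨_, hwz⟩ | ⟨hII, _⟩ | ⟨h1, h2, h3⟩
  · exact hwz
  · exact absurd hII (sphere_ne_neg_self hI)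
  · exact Complex.ext h3 (h1.trans h2.symm)

lemma isOpen_slice_iff {V : Set Hq} :
    @IsOpen Hq sliceTopology V ↔ ∀ I ∈ SphereS, IsOpen (sliceEmb I ⁻¹' V) := by
  show IsOpen[sliceTopology] V ↔ _
  rw [sliceTopology]
  rw [isOpen_iSup_iff]
  refine forall_congr' fun I => ?_
  rw [isOpen_iSup_iff]
  exact forall_congr' fun hI => isOpen_coinduced

lemma continuous_sliceEmb {I : Hq} (hI : I ∈ SphereS) :
    @Continuous ℂ Hq _ sliceTopology (sliceEmb I) := by
  rw [@continuous_def _ _ _ sliceTopology]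
  exact fun s hs => (isOpen_slice_iff.mp hs) I hI

lemma image_preconnected {s : Set ℂ} (hs : IsPreconnected s) {I : Hq} (hI : I ∈ SphereS) :
    @IsPreconnected Hq sliceTopology (sliceEmb I '' s) := by
  letI : TopologicalSpace Hq := sliceTopology
  exact hs.image _ (continuous_sliceEmb hI).continuousOn

/-- Every point of a slice-open set has a real-connected slice-domain neighbourhood
inside the set. -/
theorem exists_realConnected_sliceDomain (U : Set Hq)
    (hU : @IsOpen Hq sliceTopology U) (q : Hq) (hq : q ∈ U) :
    ∃ V : Set Hq, q ∈ V ∧ V ⊆ U ∧ @IsOpen Hq sliceTopology V ∧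
      @IsPreconnected Hq sliceTopology V ∧
      IsPreconnected ((fun x : ℝ => (x : Hq)) ⁻¹' V) := by
  by_cases hreal : ∃ x : ℝ, (x : Hq) = q
  · -- real case
    obtain ⟨x, hx⟩ := hreal
    have hI₀ : (⟨0, 1, 0, 0⟩ : Hq) ∈ SphereS := basic_I_mem
    set I₀ : Hq := ⟨0, 1, 0, 0⟩ with hI₀def
    set Rset : Set ℝ := (fun y : ℝ => (y : Hq)) ⁻¹' U with hRset
    have hRopen : IsOpen Rset := by
      have h : Rset = Complex.ofReal ⁻¹' (sliceEmb I₀ ⁻¹' U) := by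
        ext y; simp [hRset, sliceEmb_ofReal]
      rw [h]
      exact (isOpen_slice_iff.mp hU I₀ hI₀).preimage Complex.continuous_ofReal
    have hxR : x ∈ Rset := by simp [hRset, hx, hq]
    set D : Set ℝ := connectedComponentIn Rset x with hD
    have hDopen : IsOpen D := hRopen.connectedComponentIn
    have hxD : x ∈ D := mem_connectedComponentIn hxR
    set F : Set ℂ := Complex.im ⁻¹' {0} ∩ Complex.re ⁻¹' Dᶜ with hF
    have hFclosed : IsClosed F :=
      ((isClosed_singleton).preimage Complex.continuous_im).inter
        (hDopen.isClosed_compl.preimage Complex.continuous_re)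
    set A : Hq → Set ℂ := fun I => (sliceEmb I ⁻¹' U) ∩ Fᶜ with hA
    have hAopen : ∀ I ∈ SphereS, IsOpen (A I) := fun I hI =>
      (isOpen_slice_iff.mp hU I hI).inter hFclosed.isOpen_compl
    set x₀ : ℂ := (x : ℂ) with hx₀
    set D' : Set ℂ := Complex.ofReal '' D with hD'
    have hD'conn : IsPreconnected D' :=
      isPreconnected_connectedComponentIn.image _ Complex.continuous_ofReal.continuousOn
    have hx₀D' : x₀ ∈ D' := ⟨x, hxD, rfl⟩
    have hD'A : ∀ I ∈ SphereS, D' ⊆ A I := by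
      rintro I hI _ ⟨y, hy, rfl⟩
      have hyR : (y : Hq) ∈ U := connectedComponentIn_subset Rset x hy
      refine ⟨by simpa [sliceEmb_ofReal] using hyR, ?_⟩
      intro hmem
      exact hmem.2 (by simpa using hy)
    set B : Hq → Set ℂ := fun I => connectedComponentIn (A I) x₀ with hB
    have hx₀A : ∀ I ∈ SphereS, x₀ ∈ A I := fun I hI => hD'A I hI hx₀D'
    have hD'B : ∀ I ∈ SphereS, D' ⊆ B I := fun I hI =>
      hD'conn.subset_connectedComponentIn hx₀D' (hD'A I hI)
    have hx₀B : ∀ I ∈ SphereS, x₀ ∈ B I := fun I hI => mem_connectedComponentIn (hx₀A I hI)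
    have hBD' : ∀ I ∈ SphereS, ∀ w ∈ B I, w.im = 0 → w ∈ D' := by
      intro I hI w hw him
      have hwA := connectedComponentIn_subset (A I) x₀ hw
      have hre : w.re ∈ D := by
        by_contra hre
        exact hwA.2 ⟨him, hre⟩
      exact ⟨w.re, hre, (Complex.ext rfl him.symm)⟩
    have hconjA : ∀ I ∈ SphereS, ∀ u ∈ A I, (starRingEnd ℂ) u ∈ A (-I) := by
      intro I hI u hu
      constructor
      · show sliceEmb (-I) ((starRingEnd ℂ) u) ∈ U
        rw [slice_conj]
        simpa using hu.1
      · intro hmem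
        exact hu.2 ⟨by simpa using hmem.1, by simpa using hmem.2⟩
    have hconjB : ∀ I ∈ SphereS, ∀ w ∈ B I, (starRingEnd ℂ) w ∈ B (-I) := by
      intro I hI w hw
      have himg : (starRingEnd ℂ) '' (B I) ⊆ B (-I) := by
        apply IsPreconnected.subset_connectedComponentIn
        · exact isPreconnected_connectedComponentIn.image _ Complex.continuous_conj.continuousOn
        · exact ⟨x₀, hx₀B I hI, Complex.conj_ofReal x⟩
        · rintro _ ⟨u, hu, rfl⟩
          exact hconjA I hI u (connectedComponentIn_subset _ _ hu)
      exact himg ⟨w, hw, rfl⟩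
    set V : Set Hq := ⋃ I ∈ SphereS, sliceEmb I '' B I with hV
    have hqV : q ∈ V := by
      refine Set.mem_biUnion hI₀ ⟨x₀, hx₀B I₀ hI₀, ?_⟩
      rw [hx₀, sliceEmb_ofReal]; exact hx
    have hVU : V ⊆ U := by
      intro p hp
      simp only [hV, Set.mem_iUnion, Set.mem_image] at hp
      obtain ⟨I, hI, w, hw, rfl⟩ := hp
      exact (connectedComponentIn_subset (A I) x₀ hw).1
    have hpre : ∀ J ∈ SphereS, sliceEmb J ⁻¹' V = B J := by
      intro J hJ
      apply subset_antisymm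
      · intro z' hz'
        simp only [Set.mem_preimage, hV, Set.mem_iUnion, Set.mem_image] at hz'
        obtain ⟨I, hI, w, hw, heq⟩ := hz'
        rcases slice_eq_cases hI hJ heq with ⟨hIJ, rfl⟩ | ⟨hIJ, hwz⟩ | ⟨h1, h2, h3⟩
        · rwa [← hIJ]
        · have h := hconjB I hI w hw
          rw [hwz, Complex.conj_conj] at h
          rw [hIJ, neg_neg] at h
          exact h
        · have hwD' := hBD' I hI w hw h1
          have hz'w : z' = w := Complex.ext h3.symm (h2.trans h1.symm)
          rw [hz'w]
          exact hD'B J hJ hwD'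
      · intro z' hz'
        exact Set.mem_biUnion hJ ⟨z', hz', rfl⟩
    have hVopen : @IsOpen Hq sliceTopology V := by
      rw [isOpen_slice_iff]
      intro J hJ
      rw [hpre J hJ]
      exact (hAopen J hJ).connectedComponentIn
    have hVconn : @IsPreconnected Hq sliceTopology V := by
      have h : V = ⋃₀ ((fun I => sliceEmb I '' B I) '' SphereS) := by rw [Set.sUnion_image]
      rw [h]
      apply @isPreconnected_sUnion Hq sliceTopology q
      · rintro s ⟨I, hI, rfl⟩
        refine ⟨x₀, hx₀B I hI, ?_⟩
        rw [hx₀, sliceEmb_ofReal]; exact hx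
      · rintro s ⟨I, hI, rfl⟩
        exact image_preconnected isPreconnected_connectedComponentIn hI
    refine ⟨V, hqV, hVU, hVopen, hVconn, ?_⟩
    have htrace : (fun y : ℝ => (y : Hq)) ⁻¹' V = D := by
      apply subset_antisymm
      · intro y hy
        simp only [Set.mem_preimage, hV, Set.mem_iUnion, Set.mem_image] at hy
        obtain ⟨I, hI, w, hw, heq⟩ := hy
        rw [← sliceEmb_ofReal I y] at heq
        have h1 : w.im = 0 ∧ w.re = y := by
          rcases slice_eq_cases hI hI heq with ⟨_, rfl⟩ | ⟨hII, _⟩ | ⟨ha, hb, hc⟩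
          · exact ⟨by simp, by simp⟩
          · exact absurd hII (sphere_ne_neg_self hI)
          · exact ⟨ha, by simpa using hc⟩
        obtain ⟨y', hy', he⟩ := hBD' I hI w hw h1.1
        have hy'y : y' = y := by rw [← h1.2, ← he]; simp
        rwa [← hy'y]
      · intro y hy
        show (y : Hq) ∈ V
        exact Set.mem_biUnion hI₀ ⟨(y : ℂ), hD'B I₀ hI₀ ⟨y, hy, rfl⟩, sliceEmb_ofReal I₀ y⟩
    rw [htrace]
    exact isPreconnected_connectedComponentIn
  · -- nonreal case
    have him : ¬(q.imI = 0 ∧ q.imJ = 0 ∧ q.imK = 0) := by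
      rintro ⟨h1, h2, h3⟩
      exact hreal ⟨q.re, by ext <;> simp [h1, h2, h3]⟩
    set n2 : ℝ := q.imI ^ 2 + q.imJ ^ 2 + q.imK ^ 2 with hn2
    have hn2pos : 0 < n2 := by
      have e1 := sq_nonneg q.imI
      have e2 := sq_nonneg q.imJ
      have e3 := sq_nonneg q.imK
      rcases not_and_or.mp him with h | h
      · have : 0 < q.imI ^ 2 := lt_of_le_of_ne e1 (Ne.symm (pow_ne_zero 2 h))
        nlinarith
      rcases not_and_or.mp h with h | h
      · have : 0 < q.imJ ^ 2 := lt_of_le_of_ne e2 (Ne.symm (pow_ne_zero 2 h))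
        nlinarith
      · have : 0 < q.imK ^ 2 := lt_of_le_of_ne e3 (Ne.symm (pow_ne_zero 2 h))
        nlinarith
    set n : ℝ := Real.sqrt n2 with hn
    have hnpos : 0 < n := Real.sqrt_pos.mpr hn2pos
    have hnsq : n ^ 2 = n2 := Real.sq_sqrt hn2pos.le
    set I : Hq := n⁻¹ • q.im with hIdef
    have hn0 : n ≠ 0 := hnpos.ne'
    have hIS : I ∈ SphereS := by
      show I ^ 2 = -1
      rw [sq]
      ext <;>
        simp only [hIdef, Quaternion.re_mul, Quaternion.imI_mul, Quaternion.imJ_mul,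
          Quaternion.imK_mul, Quaternion.re_smul, Quaternion.imI_smul, Quaternion.imJ_smul,
          Quaternion.imK_smul, Quaternion.re_im, Quaternion.imI_im, Quaternion.imJ_im,
          Quaternion.imK_im, smul_eq_mul, Quaternion.re_neg, Quaternion.imI_neg,
          Quaternion.imJ_neg, Quaternion.imK_neg, Quaternion.re_one, Quaternion.imI_one,
          Quaternion.imJ_one, Quaternion.imK_one, mul_zero, zero_mul, neg_zero, sub_zero,
          zero_sub, add_zero, zero_add]
      · field_simp
        nlinarith [hnsq]
      · ring
      · ring
      · ring
    set z : ℂ := ⟨q.re, n⟩ with hzdef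
    have hz : sliceEmb I z = q := by
      ext
      · simp [sliceEmb, hIdef, hzdef]
      · simp only [sliceEmb, hIdef, hzdef, Quaternion.imI_add, Quaternion.imI_coe,
          Quaternion.imI_mul, Quaternion.re_coe, Quaternion.imJ_coe, Quaternion.imK_coe,
          Quaternion.imI_smul, Quaternion.re_smul, Quaternion.re_im, Quaternion.imI_im,
          smul_eq_mul, mul_zero, zero_mul, zero_add, add_zero, sub_zero]
        field_simp
      · simp only [sliceEmb, hIdef, hzdef, Quaternion.imJ_add, Quaternion.imJ_coe,
          Quaternion.imJ_mul, Quaternion.re_coe, Quaternion.imI_coe, Quaternion.imK_coe,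
          Quaternion.imJ_smul, Quaternion.re_smul, Quaternion.re_im, Quaternion.imJ_im,
          smul_eq_mul, mul_zero, zero_mul, zero_add, add_zero, sub_zero]
        field_simp
      · simp only [sliceEmb, hIdef, hzdef, Quaternion.imK_add, Quaternion.imK_coe,
          Quaternion.imK_mul, Quaternion.re_coe, Quaternion.imI_coe, Quaternion.imJ_coe,
          Quaternion.imK_smul, Quaternion.re_smul, Quaternion.re_im, Quaternion.imK_im,
          smul_eq_mul, mul_zero, zero_mul, zero_add, add_zero, sub_zero]
        field_simp
    set P : Set ℂ := sliceEmb I ⁻¹' U ∩ {w : ℂ | w.im ≠ 0} with hP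
    have hPopen : IsOpen P :=
      (isOpen_slice_iff.mp hU I hIS).inter
        (isOpen_compl_singleton.preimage Complex.continuous_im)
    have hzP : z ∈ P := ⟨by rw [Set.mem_preimage, hz]; exact hq, hnpos.ne'⟩
    set B : Set ℂ := connectedComponentIn P z with hBdef
    set V : Set Hq := sliceEmb I '' B with hVdef
    have hpreI : sliceEmb I ⁻¹' V = B := by
      apply subset_antisymm
      · intro z' hz'
        obtain ⟨w, hw, heq⟩ := hz'
        exact (sliceEmb_injective hIS heq) ▸ hw
      · intro z' hz'
        exact ⟨z', hz', rfl⟩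
    refine ⟨V, ⟨z, mem_connectedComponentIn hzP, hz⟩, ?_, ?_, ?_, ?_⟩
    · rintro _ ⟨w, hw, rfl⟩
      exact (connectedComponentIn_subset P z hw).1
    · rw [isOpen_slice_iff]
      intro J hJ
      by_cases hJI : J = I
      · rw [hJI, hpreI]
        exact hPopen.connectedComponentIn
      by_cases hJnI : J = -I
      · have hfun : sliceEmb J ⁻¹' V = (starRingEnd ℂ) ⁻¹' (sliceEmb I ⁻¹' V) := by
          ext z'
          rw [Set.mem_preimage, Set.mem_preimage, Set.mem_preimage, hJnI, slice_conj]
        rw [hfun, hpreI]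
        exact hPopen.connectedComponentIn.preimage Complex.continuous_conj
      · have hfun : sliceEmb J ⁻¹' V = ∅ := by
          ext z'
          simp only [Set.mem_preimage, Set.mem_empty_iff_false, iff_false]
          rintro ⟨w, hw, heq⟩
          rcases slice_eq_cases hIS hJ heq with ⟨hIJ, _⟩ | ⟨hIJ, _⟩ | ⟨h1, _, _⟩
          · exact hJI hIJ.symm
          · exact hJnI (by rw [hIJ, neg_neg])
          · exact (connectedComponentIn_subset P z hw).2 h1
        rw [hfun]
        exact isOpen_empty
    · exact image_preconnected isPreconnected_connectedComponentIn hIS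
    · have hempty : (fun y : ℝ => (y : Hq)) ⁻¹' V = ∅ := by
        ext y
        simp only [Set.mem_preimage, Set.mem_empty_iff_false, iff_false]
        rintro ⟨w, hw, heq⟩
        rw [← sliceEmb_ofReal I y] at heq
        rcases slice_eq_cases hIS hIS heq with ⟨_, rfl⟩ | ⟨hII, _⟩ | ⟨h1, _, _⟩
        · exact (connectedComponentIn_subset P z hw).2 (by simp)
        · exact sphere_ne_neg_self hIS hII
        · exact (connectedComponentIn_subset P z hw).2 h1
      rw [hempty]
      exact isPreconnected_empty
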